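/- Write T_y a_1 = Σ_z c^z_y a_z in the Lusztig–Vogan module M and T_y T_{y*⁻¹} = Σ_w d^w T_w in the Hecke algebra H. For any z ∈ I_* and y ∈ W, if c^z_y ≠ 0 then the coefficient of T_z in T_y T_{y*⁻¹} is nonzero. -/

import Mathlib

open LaurentPolynomial

/-- The Lusztig–Vogan formulas 1.1(i)–(iv) for the action of the generators `T_s` of the
Iwahori–Hecke algebra (with parameter `u²`) on the free `ℤ[u,u⁻¹]`-module with basis
`a_z` indexed by the twisted involutions `z` (`st z = z⁻¹`). -/
def LVFormulas {B W : Type} [Group W] {M : CoxeterMatrix B} (cs : CoxeterSystem M W)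
    (st : W ≃* W) {Mo : Type} [AddCommGroup Mo] [Module (LaurentPolynomial ℤ) Mo]
    (a : {w : W // st w = w⁻¹} → Mo)
    (Ts : B → Mo →ₗ[LaurentPolynomial ℤ] Mo) : Prop :=
  ∀ (i : B) (z : {w : W // st w = w⁻¹}),
    (cs.simple i * z.1 = z.1 * st (cs.simple i) →
      cs.length z.1 < cs.length (cs.simple i * z.1) →
      ∀ h : st (cs.simple i * z.1) = (cs.simple i * z.1)⁻¹,
        Ts i (a z) = (T 1 : LaurentPolynomial ℤ) • a z + ((T 1 + 1 : LaurentPolynomial ℤ)) • a ⟨cs.simple i * z.1, h⟩) ∧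
    (cs.simple i * z.1 = z.1 * st (cs.simple i) →
      cs.length (cs.simple i * z.1) < cs.length z.1 →
      ∀ h : st (cs.simple i * z.1) = (cs.simple i * z.1)⁻¹,
        Ts i (a z) = ((T 1 ^ 2 - T 1 - 1 : LaurentPolynomial ℤ)) • a z + ((T 1 ^ 2 - T 1 : LaurentPolynomial ℤ)) • a ⟨cs.simple i * z.1, h⟩) ∧
    (cs.simple i * z.1 ≠ z.1 * st (cs.simple i) →
      cs.length z.1 < cs.length (cs.simple i * z.1) →
      ∀ h : st (cs.simple i * z.1 * st (cs.simple i)) =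
          (cs.simple i * z.1 * st (cs.simple i))⁻¹,
        Ts i (a z) = a ⟨cs.simple i * z.1 * st (cs.simple i), h⟩) ∧
    (cs.simple i * z.1 ≠ z.1 * st (cs.simple i) →
      cs.length (cs.simple i * z.1) < cs.length z.1 →
      ∀ h : st (cs.simple i * z.1 * st (cs.simple i)) =
          (cs.simple i * z.1 * st (cs.simple i))⁻¹,
        Ts i (a z) = ((T 1 ^ 2 - 1 : LaurentPolynomial ℤ)) • a z + ((T 1 ^ 2 : LaurentPolynomial ℤ)) • a ⟨cs.simple i * z.1 * st (cs.simple i), h⟩)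

set_option maxHeartbeats 1000000
namespace S12

noncomputable def ee : LaurentPolynomial ℤ →ₐ[ℤ] ℚ :=
  AddMonoidAlgebra.lift ℤ ℚ ℤ
    { toFun := fun n => 2 ^ (Multiplicative.toAdd n)
      map_one' := by simp
      map_mul' := fun x y => by
        simp [zpow_add₀ (by norm_num : (2:ℚ) ≠ 0)] }


lemma ee_T (n : ℤ) : ee (T n) = 2 ^ n := by
  show ee (AddMonoidAlgebra.single n 1) = 2 ^ n
  rw [ee, AddMonoidAlgebra.lift_single]
  simp

lemma ee2 : ee (T 1 : LaurentPolynomial ℤ) = 2 := by rw [ee_T]; norm_num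
lemma ee4 : ee (T 1 ^ 2 : LaurentPolynomial ℤ) = 4 := by rw [map_pow, ee2]; norm_num
lemma ee3 : ee (T 1 ^ 2 - 1 : LaurentPolynomial ℤ) = 3 := by rw [map_sub, ee4, map_one]; norm_num
lemma ee3' : ee (T 1 + 1 : LaurentPolynomial ℤ) = 3 := by rw [map_add, ee2, map_one]; norm_num
lemma ee1' : ee (T 1 ^ 2 - T 1 - 1 : LaurentPolynomial ℤ) = 1 := by
  rw [map_sub, map_sub, ee4, ee2, map_one]; norm_num
lemma ee2' : ee (T 1 ^ 2 - T 1 : LaurentPolynomial ℤ) = 2 := by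
  rw [map_sub, ee4, ee2]; norm_num

lemma ee_ite (P : Prop) [Decidable P] (c : LaurentPolynomial ℤ) :
    ee (if P then c else 0) = if P then ee c else 0 := by split_ifs <;> simp

section generic

open scoped Classical

variable {V : Type} [AddCommGroup V] [Module (LaurentPolynomial ℤ) V]
variable {ι : Type} (bb : Module.Basis ι (LaurentPolynomial ℤ) V)

lemma key_sum (F : V →ₗ[LaurentPolynomial ℤ] V) (x : V) (w₂ : ι) :
    bb.repr (F x) w₂ = (bb.repr x).sum fun w c => c * bb.repr (F (bb w)) w₂ := by
  conv_lhs => rw [← bb.linearCombination_repr x, Finsupp.linearCombination_apply]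
  rw [map_finsuppSum, map_finsuppSum, Finsupp.sum_apply]
  exact Finsupp.sum_congr fun w hw => by simp [Finsupp.smul_apply]

lemma ee_key_sum (F : V →ₗ[LaurentPolynomial ℤ] V) (x : V) (w₂ : ι) :
    ee (bb.repr (F x) w₂) =
      ∑ w ∈ (bb.repr x).support, ee (bb.repr x w) * ee (bb.repr (F (bb w)) w₂) := by
  rw [key_sum bb F x w₂, Finsupp.sum, map_sum]
  simp only [map_mul]

/-- nonnegativity cone -/
def NNv (x : V) : Prop := ∀ w : ι, 0 ≤ ee (bb.repr x w)

lemma nn_of_entries (F : V →ₗ[LaurentPolynomial ℤ] V) (x : V) (hx : NNv bb x)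
    (hF : ∀ w w₂, 0 ≤ ee (bb.repr (F (bb w)) w₂)) : NNv bb (F x) := by
  intro w₂
  rw [ee_key_sum]
  exact Finset.sum_nonneg fun w _ => mul_nonneg (hx w) (hF w w₂)

lemma ge_entry (F : V →ₗ[LaurentPolynomial ℤ] V) (x : V) (hx : NNv bb x)
    (hF : ∀ w w₂, 0 ≤ ee (bb.repr (F (bb w)) w₂)) (w : ι) (w₂ : ι) :
    ee (bb.repr x w) * ee (bb.repr (F (bb w)) w₂) ≤ ee (bb.repr (F x) w₂) := by
  conv_rhs => rw [ee_key_sum bb F x w₂]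
  by_cases hw : w ∈ (bb.repr x).support
  · exact Finset.single_le_sum
      (f := fun z => ee (bb.repr x z) * ee (bb.repr (F (bb z)) w₂))
      (fun z _ => mul_nonneg (hx z) (hF z w₂)) hw
  · rw [Finsupp.notMem_support_iff] at hw
    rw [hw, map_zero, zero_mul]
    exact Finset.sum_nonneg fun z _ => mul_nonneg (hx z) (hF z w₂)

lemma pos_entry (F : V →ₗ[LaurentPolynomial ℤ] V) (x : V) (hx : NNv bb x)
    (hF : ∀ w w₂, 0 ≤ ee (bb.repr (F (bb w)) w₂)) (w : ι) (w₂ : ι)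
    (h1 : 0 < ee (bb.repr x w)) (h2 : 0 < ee (bb.repr (F (bb w)) w₂)) :
    0 < ee (bb.repr (F x) w₂) :=
  lt_of_lt_of_le (mul_pos h1 h2) (ge_entry bb F x hx hF w w₂)

lemma exists_entry (F : V →ₗ[LaurentPolynomial ℤ] V) (x : V) (w₂ : ι)
    (h : bb.repr (F x) w₂ ≠ 0) :
    ∃ w, bb.repr x w ≠ 0 ∧ bb.repr (F (bb w)) w₂ ≠ 0 := by
  rw [key_sum bb F x w₂] at h
  obtain ⟨w, _, hw⟩ := Finset.exists_ne_zero_of_sum_ne_zero h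
  exact ⟨w, left_ne_zero_of_mul hw, right_ne_zero_of_mul hw⟩

lemma repr_one' (v w : ι) : bb.repr (bb v) w = if v = w then 1 else 0 := by
  classical
  rw [bb.repr_self, Finsupp.single_apply]

lemma repr_two (c₁ c₂ : LaurentPolynomial ℤ) (v₁ v₂ w : ι) :
    bb.repr (c₁ • bb v₁ + c₂ • bb v₂) w =
      (if v₁ = w then c₁ else 0) + (if v₂ = w then c₂ else 0) := by
  classical
  rw [map_add, map_smul, map_smul, bb.repr_self, bb.repr_self, Finsupp.add_apply,
    Finsupp.smul_apply, Finsupp.smul_apply, Finsupp.single_apply, Finsupp.single_apply]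
  split_ifs <;> simp

end generic

section hecke

variable {B W : Type} [Group W] {M : CoxeterMatrix B} (cs : CoxeterSystem M W)
variable {H : Type} [Ring H] [Algebra (LaurentPolynomial ℤ) H]
variable (b : Module.Basis W (LaurentPolynomial ℤ) H)
variable (hb1 : b 1 = 1)
variable (hbmul : ∀ w w' : W, cs.length (w * w') = cs.length w + cs.length w' →
    b w * b w' = b (w * w'))
variable (hbquad : ∀ i : B,
    (b (cs.simple i) + 1) * (b (cs.simple i) - algebraMap (LaurentPolynomial ℤ) H (T 1 ^ 2)) = 0)

include hb1 hbquad in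
lemma mulss (i : B) : b (cs.simple i) * b (cs.simple i) =
    (T 1 ^ 2 - 1 : LaurentPolynomial ℤ) • b (cs.simple i) +
      (T 1 ^ 2 : LaurentPolynomial ℤ) • b 1 := by
  have h := hbquad i
  have h2 : b (cs.simple i) * b (cs.simple i)
      = b (cs.simple i) * algebraMap (LaurentPolynomial ℤ) H (T 1 ^ 2)
        + algebraMap (LaurentPolynomial ℤ) H (T 1 ^ 2) - b (cs.simple i) := by
    apply eq_of_sub_eq_zero
    calc b (cs.simple i) * b (cs.simple i) -
          (b (cs.simple i) * algebraMap (LaurentPolynomial ℤ) H (T 1 ^ 2)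
            + algebraMap (LaurentPolynomial ℤ) H (T 1 ^ 2) - b (cs.simple i))
        = (b (cs.simple i) + 1) *
            (b (cs.simple i) - algebraMap (LaurentPolynomial ℤ) H (T 1 ^ 2)) := by
          rw [add_mul, one_mul, mul_sub]; abel
      _ = 0 := h
  rw [h2, ← Algebra.commutes (T 1 ^ 2 : LaurentPolynomial ℤ) (b (cs.simple i)), ← Algebra.smul_def,
    Algebra.algebraMap_eq_smul_one, hb1, sub_smul, one_smul]
  abel

include hbmul in
lemma mulL_up (i : B) (x : W) (h : cs.length (cs.simple i * x) = cs.length x + 1) :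
    b (cs.simple i) * b x = b (cs.simple i * x) := by
  refine hbmul _ _ ?_
  rw [h, cs.length_simple]; ring

include hbmul in
lemma mulR_up (j : B) (x : W) (h : cs.length (x * cs.simple j) = cs.length x + 1) :
    b x * b (cs.simple j) = b (x * cs.simple j) := by
  refine hbmul _ _ ?_
  rw [h, cs.length_simple]

include hb1 hbmul hbquad in
lemma mulL_down (i : B) (x : W) (h : cs.length (cs.simple i * x) + 1 = cs.length x) :
    b (cs.simple i) * b x = (T 1 ^ 2 - 1 : LaurentPolynomial ℤ) • b x +
      (T 1 ^ 2 : LaurentPolynomial ℤ) • b (cs.simple i * x) := by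
  have hxx : cs.simple i * (cs.simple i * x) = x := by
    rw [← mul_assoc, cs.simple_mul_simple_self, one_mul]
  have hbx : b x = b (cs.simple i) * b (cs.simple i * x) := by
    rw [mulL_up cs b hbmul i (cs.simple i * x) (by rw [hxx]; omega)]
    rw [hxx]
  calc b (cs.simple i) * b x = (b (cs.simple i) * b (cs.simple i)) * b (cs.simple i * x) := by
        rw [hbx, mul_assoc]
    _ = _ := by
        rw [mulss cs b hb1 hbquad i, add_mul, smul_mul_assoc, smul_mul_assoc, ← hbx, hb1, one_mul]

include hb1 hbmul hbquad in
lemma mulR_down (j : B) (x : W) (h : cs.length (x * cs.simple j) + 1 = cs.length x) :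
    b x * b (cs.simple j) = (T 1 ^ 2 - 1 : LaurentPolynomial ℤ) • b x +
      (T 1 ^ 2 : LaurentPolynomial ℤ) • b (x * cs.simple j) := by
  have hxx : (x * cs.simple j) * cs.simple j = x := by
    rw [mul_assoc, cs.simple_mul_simple_self, mul_one]
  have hbx : b x = b (x * cs.simple j) * b (cs.simple j) := by
    rw [mulR_up cs b hbmul j (x * cs.simple j) (by rw [hxx]; omega), hxx]
  calc b x * b (cs.simple j) = b (x * cs.simple j) * (b (cs.simple j) * b (cs.simple j)) := by
        rw [hbx, mul_assoc]
    _ = _ := by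
        rw [mulss cs b hb1 hbquad j, mul_add, mul_smul_comm, mul_smul_comm, ← hbx, hb1, mul_one]

open scoped Classical in
include hb1 hbmul hbquad in
lemma entryL_nonneg (i : B) (w w₂ : W) : 0 ≤ ee (b.repr (b (cs.simple i) * b w) w₂) := by
  rcases cs.length_simple_mul w i with h | h
  · rw [mulL_up cs b hbmul i w h, repr_one', ee_ite]
    split_ifs <;> norm_num
  · rw [mulL_down cs b hb1 hbmul hbquad i w h, repr_two, map_add, ee_ite, ee_ite, ee3, ee4]
    split_ifs <;> norm_num

open scoped Classical in
include hb1 hbmul hbquad in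
lemma entryR_nonneg (j : B) (w w₂ : W) : 0 ≤ ee (b.repr (b w * b (cs.simple j)) w₂) := by
  rcases cs.length_mul_simple w j with h | h
  · rw [mulR_up cs b hbmul j w h, repr_one', ee_ite]
    split_ifs <;> norm_num
  · rw [mulR_down cs b hb1 hbmul hbquad j w h, repr_two, map_add, ee_ite, ee_ite, ee3, ee4]
    split_ifs <;> norm_num

open scoped Classical in
include hb1 hbmul hbquad in
lemma entryL_pos_shift (i : B) (w : W) :
    0 < ee (b.repr (b (cs.simple i) * b w) (cs.simple i * w)) := by
  rcases cs.length_simple_mul w i with h | h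
  · rw [mulL_up cs b hbmul i w h, repr_one', ee_ite]
    simp
  · rw [mulL_down cs b hb1 hbmul hbquad i w h, repr_two, map_add, ee_ite, ee_ite, ee3, ee4,
      if_pos rfl]
    split_ifs <;> norm_num

open scoped Classical in
include hb1 hbmul hbquad in
lemma entryR_pos_shift (j : B) (w : W) :
    0 < ee (b.repr (b w * b (cs.simple j)) (w * cs.simple j)) := by
  rcases cs.length_mul_simple w j with h | h
  · rw [mulR_up cs b hbmul j w h, repr_one', ee_ite]
    simp
  · rw [mulR_down cs b hb1 hbmul hbquad j w h, repr_two, map_add, ee_ite, ee_ite, ee3, ee4,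
      if_pos rfl]
    split_ifs <;> norm_num

open scoped Classical in
include hb1 hbmul hbquad in
lemma entryL_pos_self (i : B) (w : W) (h : cs.length (cs.simple i * w) + 1 = cs.length w) :
    0 < ee (b.repr (b (cs.simple i) * b w) w) := by
  rw [mulL_down cs b hb1 hbmul hbquad i w h, repr_two, map_add, ee_ite, ee_ite, ee3, ee4]
  split_ifs <;> first | (exact absurd rfl (by assumption)) | norm_num

open scoped Classical in
include hb1 hbmul hbquad in
lemma entryR_pos_self (j : B) (w : W) (h : cs.length (w * cs.simple j) + 1 = cs.length w) :
    0 < ee (b.repr (b w * b (cs.simple j)) w) := by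
  rw [mulR_down cs b hb1 hbmul hbquad j w h, repr_two, map_add, ee_ite, ee_ite, ee3, ee4]
  split_ifs <;> first | (exact absurd rfl (by assumption)) | norm_num

end hecke

section comb

variable {B W : Type} [Group W] {M : CoxeterMatrix B} (cs : CoxeterSystem M W) (st : W ≃* W)
variable (hst_inv : ∀ w, st (st w) = w)
variable (hst_S : ∀ i : B, ∃ j : B, st (cs.simple i) = cs.simple j)

include hst_S in
lemma length_st_le (w : W) : cs.length (st w) ≤ cs.length w := by
  obtain ⟨ω, hlen, hw⟩ := cs.exists_reduced_word w
  have key : ∀ ω : List B, ∃ ω' : List B, ω'.length = ω.length ∧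
      st (cs.wordProd ω) = cs.wordProd ω' := by
    intro ω
    induction ω with
    | nil => exact ⟨[], rfl, by simp⟩
    | cons i ω ih =>
      obtain ⟨ω', hlen', hω'⟩ := ih
      obtain ⟨j, hj⟩ := hst_S i
      refine ⟨j :: ω', by simp [hlen'], ?_⟩
      rw [cs.wordProd_cons, cs.wordProd_cons, map_mul, hj, hω']
  obtain ⟨ω', hlen', hω'⟩ := key ω
  calc cs.length (st w) = cs.length (cs.wordProd ω') := by rw [hw, hω']
    _ ≤ ω'.length := cs.length_wordProd_le ω'
    _ = cs.length w := by rw [hlen', hw]; exact hlen.symm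

include hst_inv hst_S in
lemma length_st (w : W) : cs.length (st w) = cs.length w := by
  refine le_antisymm (length_st_le cs st hst_S w) ?_
  have := length_st_le cs st hst_S (st w)
  rwa [hst_inv] at this

include hst_inv hst_S in
/-- for a twisted involution `z`, `ℓ(z * s j) = ℓ(s i * z)` where `s j = st (s i)` -/
lemma length_mul_stsimple (z : W) (hz : st z = z⁻¹) (i j : B)
    (hj : st (cs.simple i) = cs.simple j) :
    cs.length (z * cs.simple j) = cs.length (cs.simple i * z) := by
  have h1 : (z * cs.simple j)⁻¹ = cs.simple j * z⁻¹ := by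
    rw [mul_inv_rev, cs.inv_simple]
  have h2 : st (cs.simple i * z) = cs.simple j * z⁻¹ := by
    rw [map_mul, hj, hz]
  calc cs.length (z * cs.simple j) = cs.length ((z * cs.simple j)⁻¹) := (cs.length_inv _).symm
    _ = cs.length (cs.simple j * z⁻¹) := by rw [h1]
    _ = cs.length (st (cs.simple i * z)) := by rw [h2]
    _ = cs.length (cs.simple i * z) := length_st cs st hst_inv hst_S _

/-- twisted involution closure, commuting case -/
lemma tw1 (z : W) (hz : st z = z⁻¹) (i : B) (hcomm : cs.simple i * z = z * st (cs.simple i)) :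
    st (cs.simple i * z) = (cs.simple i * z)⁻¹ := by
  have h : z⁻¹ * cs.simple i = st (cs.simple i) * z⁻¹ := by
    have := congrArg (fun w => z⁻¹ * w * z⁻¹) hcomm
    simpa [mul_assoc] using this
  rw [map_mul, hz, mul_inv_rev, cs.inv_simple, ← h]

include hst_inv in
/-- twisted involution closure, noncommuting case -/
lemma tw2 (z : W) (hz : st z = z⁻¹) (i j : B) (hj : st (cs.simple i) = cs.simple j) :
    st (cs.simple i * z * st (cs.simple i)) = (cs.simple i * z * st (cs.simple i))⁻¹ := by
  rw [map_mul, map_mul, hz, hst_inv, mul_inv_rev, mul_inv_rev, hj, cs.inv_simple, cs.inv_simple, mul_assoc]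

end comb

section main

variable {B W : Type} [Group W] {M : CoxeterMatrix B} (cs : CoxeterSystem M W) (st : W ≃* W)
variable (hst_inv : ∀ w, st (st w) = w)
variable (hst_S : ∀ i : B, ∃ j : B, st (cs.simple i) = cs.simple j)
variable {H : Type} [Ring H] [Algebra (LaurentPolynomial ℤ) H]
variable (b : Module.Basis W (LaurentPolynomial ℤ) H)
variable (hb1 : b 1 = 1)
variable (hbmul : ∀ w w' : W, cs.length (w * w') = cs.length w + cs.length w' →
    b w * b w' = b (w * w'))
variable (hbquad : ∀ i : B,
    (b (cs.simple i) + 1) * (b (cs.simple i) - algebraMap (LaurentPolynomial ℤ) H (T 1 ^ 2)) = 0)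
variable {Mo : Type} [AddCommGroup Mo] [Module (LaurentPolynomial ℤ) Mo]
variable (a : Module.Basis {w : W // st w = w⁻¹} (LaurentPolynomial ℤ) Mo)
variable (Tact : W → (Mo →ₗ[LaurentPolynomial ℤ] Mo))
variable (hTacts : LVFormulas cs st a (fun i => Tact (cs.simple i)))

open scoped Classical in
include hst_inv hst_S hb1 hbmul hbquad hTacts in
lemma crux (i : B) (j : B) (hj : st (cs.simple i) = cs.simple j)
    (z z₂ : {w : W // st w = w⁻¹})
    (hne : a.repr (Tact (cs.simple i) (a z)) z₂ ≠ 0) :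
    0 < ee (a.repr (Tact (cs.simple i) (a z)) z₂) ∧
    ∃ w₁ : W, 0 < ee (b.repr (b z.1 * b (cs.simple j)) w₁) ∧
      0 < ee (b.repr (b (cs.simple i) * b w₁) z₂.1) := by
  obtain ⟨lv1, lv2, lv3, lv4⟩ := hTacts i z
  by_cases hcomm : cs.simple i * z.1 = z.1 * st (cs.simple i)
  · have hcomm' : cs.simple i * z.1 = z.1 * cs.simple j := by rw [← hj]; exact hcomm
    have htw : st (cs.simple i * z.1) = (cs.simple i * z.1)⁻¹ := tw1 cs st z.1 z.2 i hcomm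
    rcases cs.length_simple_mul z.1 i with hup | hdown
    · -- case (i): commuting, length up
      have heq := lv1 hcomm (by omega) htw
      simp only [heq] at hne ⊢
      rw [repr_two] at hne
      rw [repr_two, map_add, ee_ite, ee_ite, ee2, ee3']
      have hcases : z = z₂ ∨ (⟨cs.simple i * z.1, htw⟩ : {w : W // st w = w⁻¹}) = z₂ := by
        by_contra hc
        push_neg at hc
        rw [if_neg hc.1, if_neg hc.2] at hne
        simp at hne
      constructor
      · rcases hcases with hc | hc
        · rw [if_pos hc]; split_ifs <;> norm_num
        · rw [if_pos hc]; split_ifs <;> norm_num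
      · refine ⟨z.1 * cs.simple j, entryR_pos_shift cs b hb1 hbmul hbquad j z.1, ?_⟩
        rcases hcases with hc | hc
        · have h2 := entryL_pos_shift cs b hb1 hbmul hbquad i (z.1 * cs.simple j)
          have hc1 : z.1 = z₂.1 := congrArg Subtype.val hc
          rw [show cs.simple i * (z.1 * cs.simple j) = z₂.1 by
            rw [← hcomm', ← mul_assoc, cs.simple_mul_simple_self, one_mul, hc1]] at h2
          exact h2
        · have hc1 : cs.simple i * z.1 = z₂.1 := congrArg Subtype.val hc
          have h2 := entryL_pos_self cs b hb1 hbmul hbquad i (z.1 * cs.simple j)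
            (by rw [← hcomm', ← mul_assoc, cs.simple_mul_simple_self, one_mul]; omega)
          rw [← hc1, hcomm']
          exact h2
    · -- case (ii): commuting, length down
      have heq := lv2 hcomm (by omega) htw
      simp only [heq] at hne ⊢
      rw [repr_two] at hne
      rw [repr_two, map_add, ee_ite, ee_ite, ee1', ee2']
      have hcases : z = z₂ ∨ (⟨cs.simple i * z.1, htw⟩ : {w : W // st w = w⁻¹}) = z₂ := by
        by_contra hc
        push_neg at hc
        rw [if_neg hc.1, if_neg hc.2] at hne
        simp at hne
      constructor
      · rcases hcases with hc | hc
        · rw [if_pos hc]; split_ifs <;> norm_num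
        · rw [if_pos hc]; split_ifs <;> norm_num
      · refine ⟨z.1, entryR_pos_self cs b hb1 hbmul hbquad j z.1
          (by rw [← hcomm']; omega), ?_⟩
        rcases hcases with hc | hc
        · have hc1 : z.1 = z₂.1 := congrArg Subtype.val hc
          have h2 := entryL_pos_self cs b hb1 hbmul hbquad i z.1 (by omega)
          rw [hc1] at h2 ⊢
          exact h2
        · have hc1 : cs.simple i * z.1 = z₂.1 := congrArg Subtype.val hc
          have h2 := entryL_pos_shift cs b hb1 hbmul hbquad i z.1
          rw [hc1] at h2
          exact h2
  · have htw2 : st (cs.simple i * z.1 * st (cs.simple i)) =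
        (cs.simple i * z.1 * st (cs.simple i))⁻¹ := tw2 cs st hst_inv z.1 z.2 i j hj
    have hsj : cs.simple i * z.1 * st (cs.simple i) = cs.simple i * (z.1 * cs.simple j) := by
      rw [hj, mul_assoc]
    rcases cs.length_simple_mul z.1 i with hup | hdown
    · -- case (iii): noncommuting, length up
      have heq := lv3 hcomm (by omega) htw2
      simp only [heq] at hne ⊢
      rw [repr_one'] at hne
      rw [repr_one', ee_ite]
      have hc : (⟨cs.simple i * z.1 * st (cs.simple i), htw2⟩ : {w : W // st w = w⁻¹}) = z₂ := by
        by_contra hcc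
        rw [if_neg hcc] at hne
        simp at hne
      constructor
      · rw [if_pos hc]; norm_num
      · refine ⟨z.1 * cs.simple j, entryR_pos_shift cs b hb1 hbmul hbquad j z.1, ?_⟩
        have hc1 : cs.simple i * z.1 * st (cs.simple i) = z₂.1 := congrArg Subtype.val hc
        have h2 := entryL_pos_shift cs b hb1 hbmul hbquad i (z.1 * cs.simple j)
        rw [show cs.simple i * (z.1 * cs.simple j) = z₂.1 by rw [← hsj, hc1]] at h2
        exact h2
    · -- case (iv): noncommuting, length down
      have heq := lv4 hcomm (by omega) htw2
      simp only [heq] at hne ⊢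
      rw [repr_two] at hne
      rw [repr_two, map_add, ee_ite, ee_ite, ee3, ee4]
      have hcases : z = z₂ ∨
          (⟨cs.simple i * z.1 * st (cs.simple i), htw2⟩ : {w : W // st w = w⁻¹}) = z₂ := by
        by_contra hc
        push_neg at hc
        rw [if_neg hc.1, if_neg hc.2] at hne
        simp at hne
      constructor
      · rcases hcases with hc | hc
        · rw [if_pos hc]; split_ifs <;> norm_num
        · rw [if_pos hc]; split_ifs <;> norm_num
      · rcases hcases with hc | hc
        · refine ⟨z.1, entryR_pos_self cs b hb1 hbmul hbquad j z.1 ?_, ?_⟩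
          · rw [length_mul_stsimple cs st hst_inv hst_S z.1 z.2 i j hj]; omega
          · have hc1 : z.1 = z₂.1 := congrArg Subtype.val hc
            have h2 := entryL_pos_self cs b hb1 hbmul hbquad i z.1 (by omega)
            rw [hc1] at h2 ⊢
            exact h2
        · have hc1 : cs.simple i * z.1 * st (cs.simple i) = z₂.1 := congrArg Subtype.val hc
          refine ⟨z.1 * cs.simple j, entryR_pos_shift cs b hb1 hbmul hbquad j z.1, ?_⟩
          have h2 := entryL_pos_shift cs b hb1 hbmul hbquad i (z.1 * cs.simple j)
          rw [show cs.simple i * (z.1 * cs.simple j) = z₂.1 by rw [← hsj, hc1]] at h2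
          exact h2

open scoped Classical in
include hst_inv hTacts in
lemma entryM_nonneg (i : B) (j' : B) (hj' : st (cs.simple i) = cs.simple j')
    (z z₂ : {w : W // st w = w⁻¹}) :
    0 ≤ ee (a.repr (Tact (cs.simple i) (a z)) z₂) := by
  obtain ⟨lv1, lv2, lv3, lv4⟩ := hTacts i z
  by_cases hcomm : cs.simple i * z.1 = z.1 * st (cs.simple i)
  · have htw : st (cs.simple i * z.1) = (cs.simple i * z.1)⁻¹ := tw1 cs st z.1 z.2 i hcomm
    rcases cs.length_simple_mul z.1 i with hup | hdown
    · have heq := lv1 hcomm (by omega) htw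
      simp only [heq]
      rw [repr_two, map_add, ee_ite, ee_ite, ee2, ee3']
      split_ifs <;> norm_num
    · have heq := lv2 hcomm (by omega) htw
      simp only [heq]
      rw [repr_two, map_add, ee_ite, ee_ite, ee1', ee2']
      split_ifs <;> norm_num
  · have htw2 : st (cs.simple i * z.1 * st (cs.simple i)) =
        (cs.simple i * z.1 * st (cs.simple i))⁻¹ := tw2 cs st hst_inv z.1 z.2 i j' hj'
    rcases cs.length_simple_mul z.1 i with hup | hdown
    · have heq := lv3 hcomm (by omega) htw2
      simp only [heq]
      rw [repr_one', ee_ite]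
      split_ifs <;> norm_num
    · have heq := lv4 hcomm (by omega) htw2
      simp only [heq]
      rw [repr_two, map_add, ee_ite, ee_ite, ee3, ee4]
      split_ifs <;> norm_num

include hst_inv hst_S hb1 hbmul hbquad hTacts in
lemma master (h1 : st (1 : W) = (1 : W)⁻¹)
    (hTact1 : Tact 1 = LinearMap.id)
    (hTactmul : ∀ w w' : W, cs.length (w * w') = cs.length w + cs.length w' →
      Tact (w * w') = (Tact w) ∘ₗ (Tact w')) :
    ∀ (n : ℕ) (y : W), cs.length y = n →
      (∀ z₂, 0 ≤ ee (a.repr (Tact y (a ⟨1, h1⟩)) z₂)) ∧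
      (∀ w₂, 0 ≤ ee (b.repr (b y * b ((st y)⁻¹)) w₂)) ∧
      (∀ z₂, a.repr (Tact y (a ⟨1, h1⟩)) z₂ ≠ 0 →
        0 < ee (a.repr (Tact y (a ⟨1, h1⟩)) z₂) ∧
        0 < ee (b.repr (b y * b ((st y)⁻¹)) z₂.1)) := by
  classical
  intro n
  induction n using Nat.strong_induction_on with
  | _ n ih =>
    intro y hy
    rcases Nat.eq_zero_or_pos n with hn0 | hnpos
    · -- base case : y = 1
      have hy1 : y = 1 := cs.length_eq_zero_iff.mp (by omega)
      subst hy1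
      have e1 : Tact 1 (a ⟨1, h1⟩) = a ⟨1, h1⟩ := by rw [hTact1]; rfl
      have e2 : b (1 : W) * b ((st (1 : W))⁻¹) = b (1 : W) := by
        rw [show (st (1 : W))⁻¹ = (1 : W) by rw [map_one, inv_one], hb1, one_mul]
      refine ⟨?_, ?_, ?_⟩
      · intro z₂
        rw [e1, repr_one', ee_ite]
        split_ifs <;> norm_num
      · intro w₂
        rw [e2, repr_one', ee_ite]
        split_ifs <;> norm_num
      · intro z₂ hz₂
        rw [e1, repr_one'] at hz₂
        have hz : (⟨1, h1⟩ : {w : W // st w = w⁻¹}) = z₂ := by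
          by_contra hc
          rw [if_neg hc] at hz₂
          simp at hz₂
        have hz1 : (1 : W) = z₂.1 := congrArg Subtype.val hz
        constructor
        · rw [e1, repr_one', ee_ite, if_pos hz]; norm_num
        · rw [e2, repr_one', ee_ite, if_pos hz1]; norm_num
    · -- inductive step
      have hy1 : y ≠ 1 := fun hc => by rw [hc, cs.length_one] at hy; omega
      obtain ⟨i, hdesc⟩ := cs.exists_leftDescent_of_ne_one hy1
      obtain ⟨j, hj⟩ := hst_S i
      set y' := cs.simple i * y with hy'
      have hyy : y = cs.simple i * y' := by
        rw [hy', ← mul_assoc, cs.simple_mul_simple_self, one_mul]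
      have hlen1 : cs.length y' + 1 = cs.length y := by
        rcases cs.length_simple_mul y i with hc | hc
        · exact absurd hdesc (by unfold CoxeterSystem.IsLeftDescent; omega)
        · exact hc
      have hlen' : cs.length (cs.simple i * y') = cs.length (cs.simple i) + cs.length y' := by
        rw [cs.length_simple, ← hyy]; omega
      -- module side decomposition
      have hT : Tact y (a ⟨1, h1⟩) = Tact (cs.simple i) (Tact y' (a ⟨1, h1⟩)) := by
        conv_lhs => rw [hyy]
        rw [hTactmul _ _ hlen']; rfl
      -- Hecke side decomposition
      have hsty : (st y)⁻¹ = (st y')⁻¹ * cs.simple j := by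
        conv_lhs => rw [hyy]
        rw [map_mul, hj, mul_inv_rev, cs.inv_simple]
      have hlen2 : cs.length ((st y')⁻¹ * cs.simple j) =
          cs.length ((st y')⁻¹) + cs.length (cs.simple j) := by
        have hinv : ((st y')⁻¹ * cs.simple j)⁻¹ = st y := by
          rw [mul_inv_rev, cs.inv_simple, inv_inv, ← hj, ← map_mul, ← hyy]
        have e3 : cs.length ((st y')⁻¹ * cs.simple j) = cs.length y := by
          rw [← cs.length_inv, hinv, length_st cs st hst_inv hst_S]
        rw [e3, cs.length_simple, cs.length_inv, length_st cs st hst_inv hst_S]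
        omega
      have hb_eq : b y * b ((st y)⁻¹) =
          b (cs.simple i) * ((b y' * b ((st y')⁻¹)) * b (cs.simple j)) := by
        have hby : b y = b (cs.simple i) * b y' := by
          rw [hbmul _ _ hlen', ← hyy]
        have hb2 : b ((st y)⁻¹) = b ((st y')⁻¹) * b (cs.simple j) := by
          rw [hbmul _ _ hlen2, ← hsty]
        rw [hby, hb2, mul_assoc, mul_assoc]
      -- the IH
      obtain ⟨IH1, IH2, IH3⟩ := ih (cs.length y') (by omega) y' rfl
      -- linear maps
      set FL : H →ₗ[LaurentPolynomial ℤ] H :=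
        LinearMap.mulLeft (LaurentPolynomial ℤ) (b (cs.simple i)) with hFL
      set FR : H →ₗ[LaurentPolynomial ℤ] H :=
        LinearMap.mulRight (LaurentPolynomial ℤ) (b (cs.simple j)) with hFR
      set X : H := b y' * b ((st y')⁻¹) with hX
      have hXnn : NNv b X := IH2
      have hRnn : ∀ w w₂, 0 ≤ ee (b.repr (FR (b w)) w₂) := by
        intro w w₂
        rw [hFR, LinearMap.mulRight_apply]
        exact entryR_nonneg cs b hb1 hbmul hbquad j w w₂
      have hLnn : ∀ w w₂, 0 ≤ ee (b.repr (FL (b w)) w₂) := by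
        intro w w₂
        rw [hFL, LinearMap.mulLeft_apply]
        exact entryL_nonneg cs b hb1 hbmul hbquad i w w₂
      have hX2nn : NNv b (FR X) := nn_of_entries b FR X hXnn hRnn
      have hMnn : ∀ z z₂, 0 ≤ ee (a.repr (Tact (cs.simple i) (a z)) z₂) :=
        fun z z₂ => entryM_nonneg cs st hst_inv a Tact hTacts i j hj z z₂
      have hdvec : b y * b ((st y)⁻¹) = FL (FR X) := by
        rw [hFL, hFR, LinearMap.mulLeft_apply, LinearMap.mulRight_apply, hX, hb_eq]
      refine ⟨?_, ?_, ?_⟩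
      · intro z₂
        rw [hT]
        exact nn_of_entries a (Tact (cs.simple i)) _ IH1 hMnn z₂
      · intro w₂
        rw [hdvec]
        exact nn_of_entries b FL (FR X) hX2nn hLnn w₂
      · intro z₂ hz₂
        rw [hT] at hz₂ ⊢
        obtain ⟨z, hz, hzz⟩ := exists_entry a (Tact (cs.simple i)) _ z₂ hz₂
        obtain ⟨hCpos, hDpos⟩ := IH3 z hz
        obtain ⟨hpos_entry, w₁, hR1, hL1⟩ :=
          crux cs st hst_inv hst_S b hb1 hbmul hbquad a Tact hTacts i j hj z z₂ hzz
        constructor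
        · exact pos_entry a (Tact (cs.simple i)) _ IH1 hMnn z z₂ hCpos hpos_entry
        · rw [hdvec]
          have hstep1 : 0 < ee (b.repr (FR X) w₁) := by
            have hge := ge_entry b FR X hXnn hRnn z.1 w₁
            rw [hFR, LinearMap.mulRight_apply] at hge
            exact lt_of_lt_of_le (mul_pos hDpos hR1) hge
          have hL1' : 0 < ee (b.repr (FL (b w₁)) z₂.1) := by
            rw [hFL, LinearMap.mulLeft_apply]; exact hL1
          exact pos_entry b FL (FR X) hX2nn hLnn w₁ z₂.1 hstep1 hL1'

end main

end S12

/-- **Proposition 1.7.** Write `T_y a_1 = Σ_z c^z_y a_z` in the Lusztig–Vogan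
module and expand `T_y T_{(y*)⁻¹}` in the basis `(T_w)` of the Hecke algebra.  For any twisted
involution `z` and `y ∈ W`, if `c^z_y ≠ 0` then the coefficient of `T_z` in `T_y T_{(y*)⁻¹}`
is nonzero. -/
theorem statement12 {B W : Type} [Group W] [Finite B] {M : CoxeterMatrix B}
    (cs : CoxeterSystem M W) (st : W ≃* W)
    (hst_inv : ∀ w, st (st w) = w)
    (hst_S : ∀ i : B, ∃ j : B, st (cs.simple i) = cs.simple j)
    (H : Type) [Ring H] [Algebra (LaurentPolynomial ℤ) H]
    (b : Module.Basis W (LaurentPolynomial ℤ) H)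
    (hb1 : b 1 = 1)
    (hbmul : ∀ w w' : W, cs.length (w * w') = cs.length w + cs.length w' →
      b w * b w' = b (w * w'))
    (hbquad : ∀ i : B,
      (b (cs.simple i) + 1) * (b (cs.simple i) - algebraMap (LaurentPolynomial ℤ) H (T 1 ^ 2)) = 0)
    (Mo : Type) [AddCommGroup Mo] [Module (LaurentPolynomial ℤ) Mo]
    (a : Module.Basis {w : W // st w = w⁻¹} (LaurentPolynomial ℤ) Mo)
    (Tact : W → (Mo →ₗ[LaurentPolynomial ℤ] Mo))
    (hTact1 : Tact 1 = LinearMap.id)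
    (hTactmul : ∀ w w' : W, cs.length (w * w') = cs.length w + cs.length w' →
      Tact (w * w') = (Tact w) ∘ₗ (Tact w'))
    (hTacts : LVFormulas cs st a (fun i => Tact (cs.simple i)))
    (h1 : st (1 : W) = (1 : W)⁻¹) :
    ∀ (z : {w : W // st w = w⁻¹}) (y : W),
      a.repr (Tact y (a ⟨1, h1⟩)) z ≠ 0 →
      b.repr (b y * b ((st y)⁻¹)) z.1 ≠ 0 := by
  intro z y hne
  have hm := S12.master cs st hst_inv hst_S b hb1 hbmul hbquad a Tact hTacts h1 hTact1 hTactmul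
    (cs.length y) y rfl
  have hpos := (hm.2.2 z hne).2
  intro hzero
  rw [hzero] at hpos
  simp at hpos
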